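/- Let X be a set and let G ≤ Equiv.Perm X be an abelian subgroup acting transitively on X. If G is not cyclic, then G is not the operator group of any rack on X; that is, there is no rack operation ▷ on X whose operator group equals G. -/

import Mathlib

/-- A rack: right multiplications are bijections, and self-distributivity holds. -/
def IsRack {X : Type*} (op : X → X → X) : Prop :=
  (∀ y : X, Function.Bijective fun x => op x y) ∧
  ∀ x y z : X, op (op x y) z = op (op x z) (op y z)

/-- The operator group of a binary operation: the subgroup of `Equiv.Perm X` generated by
the permutations `x ↦ x ▷ y` for `y ∈ X`. -/
def OpGroup {X : Type*} (op : X → X → X) : Subgroup (Equiv.Perm X) :=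
  Subgroup.closure {σ : Equiv.Perm X | ∃ y : X, ∀ x : X, σ x = op x y}

/-- A non-cyclic abelian transitive subgroup of `Equiv.Perm X` is not the operator group
of any rack on `X`. -/
theorem abelian_transitive_noncyclic_not_opgroup {X : Type*}
    (G : Subgroup (Equiv.Perm X))
    (hab : ∀ a ∈ G, ∀ b ∈ G, a * b = b * a)
    (htrans : ∀ x y : X, ∃ g ∈ G, g x = y)
    (hnc : ¬ IsCyclic G) :
    ¬ ∃ op : X → X → X, IsRack op ∧ OpGroup op = G := by
  rintro ⟨op, ⟨hbij, hdist⟩, hG⟩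
  cases isEmpty_or_nonempty X with
  | inl h =>
    have : Subsingleton (Equiv.Perm X) := inferInstance
    exact hnc (isCyclic_of_subsingleton)
  | inr h =>
    obtain ⟨y₀⟩ := h
    -- the operator permutations
    set f : X → Equiv.Perm X := fun y => Equiv.ofBijective _ (hbij y) with hf
    have hfapp : ∀ y x, f y x = op x y := fun y x => rfl
    have hfS : ∀ y, f y ∈ {σ : Equiv.Perm X | ∃ y : X, ∀ x : X, σ x = op x y} :=
      fun y => ⟨y, fun x => rfl⟩
    have hfG : ∀ y, f y ∈ G := fun y => hG ▸ Subgroup.subset_closure (hfS y)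
    -- key identity: f (op y z) = f z * f y * (f z)⁻¹
    have hconj : ∀ y z, f (op y z) = f z * f y * (f z)⁻¹ := by
      intro y z
      rw [eq_comm, mul_inv_eq_iff_eq_mul]
      ext x
      simp only [Equiv.Perm.mul_apply, hfapp]
      exact hdist x y z
    -- hence f is constant along operators
    have hkey : ∀ y z, f (op y z) = f y := by
      intro y z
      rw [hconj, hab _ (hfG z) _ (hfG y), mul_assoc, mul_inv_cancel, mul_one]
    -- f is constant along G-orbits
    have hGinv : ∀ g ∈ G, ∀ y, f (g y) = f y := by
      intro g hg
      rw [← hG] at hg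
      induction hg using Subgroup.closure_induction with
      | mem σ hσ =>
        obtain ⟨z, hz⟩ := hσ
        intro y; rw [hz y]; exact hkey y z
      | one => intro y; simp
      | mul a b _ _ ha hb => intro y; simp only [Equiv.Perm.mul_apply]; rw [ha, hb]
      | inv a _ ha => intro y; have := ha (a⁻¹ y); rw [show a (a⁻¹ y) = y from a.apply_symm_apply y] at this; exact this.symm
    -- all f y are equal to f y₀
    have hconst : ∀ y, f y = f y₀ := by
      intro y
      obtain ⟨g, hg, hgy⟩ := htrans y₀ y
      rw [← hgy, hGinv g hg]
    -- hence G is cyclic, generated by f y₀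
    set g₀ : G := ⟨f y₀, hfG y₀⟩ with hg₀
    have hGz : G = Subgroup.zpowers (f y₀) := by
      rw [Subgroup.zpowers_eq_closure, ← hG, OpGroup]
      congr 1
      ext σ
      constructor
      · rintro ⟨z, hz⟩
        have : σ = f z := Equiv.ext fun x => by rw [hz x, hfapp]
        simp [this, hconst z]
      · rintro rfl
        exact hfS y₀
    refine hnc ⟨⟨g₀, ?_⟩⟩
    rintro ⟨x, hx⟩
    obtain ⟨k, hk⟩ := Subgroup.mem_zpowers_iff.mp (hGz ▸ hx)
    exact Subgroup.mem_zpowers_iff.mpr ⟨k, Subtype.ext (by push_cast; exact hk)⟩
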